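/- For all real x ≠ 0, ∑_{q=0}^∞ j_q(x) j_{q+1}(x) = (1 − j_0(2x))/(2x). -/

import Mathlib

/-- The spherical Bessel function of the first kind of order `q`, defined by its power
series `j_q(x) = (√π / 2^{q+1}) x^q ∑_{k≥0} (-1)^k (x/2)^{2k} / (k! Γ(k+q+3/2))`. -/
noncomputable def sphBessel (q : ℕ) (x : ℝ) : ℝ :=
  (Real.sqrt Real.pi / 2 ^ (q + 1)) * x ^ q *
    ∑' k : ℕ, (-1 : ℝ) ^ k * (x / 2) ^ (2 * k) /
      (Nat.factorial k * Real.Gamma ((k : ℝ) + (q : ℝ) + 3 / 2))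

/-- The sine integral `Si(x) = ∫₀^x sin t / t dt`. -/
noncomputable def Si (x : ℝ) : ℝ := ∫ t in (0 : ℝ)..x, Real.sin t / t

open Finset Real

noncomputable def gch (x : ℝ) (k : ℕ) : ℝ := (∏ i ∈ range k, (x - i)) / (Nat.factorial k)

lemma gch_zero (x : ℝ) : gch x 0 = 1 := by simp [gch]

lemma gch_absorb (x : ℝ) (k : ℕ) : (k + 1 : ℝ) * gch x (k + 1) = x * gch (x - 1) k := by
  have h1 : (∏ i ∈ range (k+1), (x - i)) = x * ∏ i ∈ range k, ((x - 1) - i) := by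
    rw [Finset.prod_range_succ' (fun i => (x - (i:ℕ)))]
    simp only [Nat.cast_zero, sub_zero]
    rw [mul_comm]
    congr 1
    apply Finset.prod_congr rfl
    intro i _
    push_cast
    ring
  unfold gch
  rw [h1, Nat.factorial_succ]
  push_cast
  have hk : ((Nat.factorial k : ℝ)) ≠ 0 := by positivity
  field_simp

lemma gch_vandermonde : ∀ (n : ℕ) (x y : ℝ),
    ∑ p ∈ Finset.HasAntidiagonal.antidiagonal n, gch x p.1 * gch y p.2 = gch (x + y) n := by
  intro n
  induction n with
  | zero => intro x y; simp [gch]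
  | succ n ih =>
      intro x y
      have key : ((n:ℝ) + 1) * ∑ p ∈ Finset.HasAntidiagonal.antidiagonal (n+1), gch x p.1 * gch y p.2
          = ((n:ℝ) + 1) * gch (x + y) (n + 1) := by
        have expand : ((n:ℝ) + 1) * ∑ p ∈ Finset.HasAntidiagonal.antidiagonal (n+1), gch x p.1 * gch y p.2
            = (∑ p ∈ Finset.HasAntidiagonal.antidiagonal (n+1), (p.1 : ℝ) * gch x p.1 * gch y p.2)
              + (∑ p ∈ Finset.HasAntidiagonal.antidiagonal (n+1), (p.2 : ℝ) * gch x p.1 * gch y p.2) := by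
          rw [Finset.mul_sum, ← Finset.sum_add_distrib]
          apply Finset.sum_congr rfl
          intro p hp
          have := Finset.HasAntidiagonal.mem_antidiagonal.mp hp
          have : (p.1 : ℝ) + p.2 = (n : ℝ) + 1 := by exact_mod_cast congrArg (Nat.cast (R := ℝ)) this
          linear_combination (-(gch x p.1 * gch y p.2)) * this
        have s1 : (∑ p ∈ Finset.HasAntidiagonal.antidiagonal (n+1), (p.1 : ℝ) * gch x p.1 * gch y p.2)
            = x * gch (x - 1 + y) n := by
          rw [Finset.Nat.sum_antidiagonal_succ (f := fun p => (p.1 : ℝ) * gch x p.1 * gch y p.2)]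
          simp only [Nat.cast_zero, zero_mul]
          rw [zero_add, ← ih (x-1) y, Finset.mul_sum]
          apply Finset.sum_congr rfl
          intro p _
          push_cast
          rw [show ((p.1:ℝ) + 1) * gch x (p.1 + 1) * gch y p.2
              = (((p.1:ℕ):ℝ) + 1) * gch x (p.1 + 1) * gch y p.2 by norm_num,
            show (((p.1:ℕ):ℝ) + 1) * gch x (p.1 + 1) = x * gch (x-1) p.1 from gch_absorb x p.1]
          ring
        have s2 : (∑ p ∈ Finset.HasAntidiagonal.antidiagonal (n+1), (p.2 : ℝ) * gch x p.1 * gch y p.2)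
            = y * gch (x + (y - 1)) n := by
          rw [Finset.Nat.sum_antidiagonal_succ' (f := fun p => (p.2 : ℝ) * gch x p.1 * gch y p.2)]
          simp only [Nat.cast_zero, zero_mul]
          rw [zero_add, ← ih x (y-1), Finset.mul_sum]
          apply Finset.sum_congr rfl
          intro p _
          push_cast
          rw [show ((p.2:ℝ) + 1) * gch x p.1 * gch y (p.2 + 1)
              = gch x p.1 * ((((p.2:ℕ):ℝ) + 1) * gch y (p.2 + 1)) by push_cast; ring,
            gch_absorb y p.2]
          ring
        rw [expand, s1, s2]
        have : x * gch (x - 1 + y) n + y * gch (x + (y - 1)) n = (x + y) * gch ((x+y) - 1) n := by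
          rw [show x - 1 + y = (x+y) - 1 by ring, show x + (y-1) = (x+y)-1 by ring]; ring
        rw [this, ← gch_absorb (x+y) n]
      have hne : ((n : ℝ) + 1) ≠ 0 := by positivity
      exact mul_left_cancel₀ hne key

lemma gamma_prod (x : ℝ) : ∀ (k : ℕ), 0 < x - k + 1 →
    Real.Gamma (x + 1) = (∏ i ∈ range k, (x - i)) * Real.Gamma (x - k + 1) := by
  intro k
  induction k with
  | zero => intro h; simp
  | succ k ih =>
      intro h
      have hxk : 0 < x - k := by
        have : ((k:ℝ)) ≤ (k:ℝ) + 1 := by linarith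
        push_cast at h ⊢
        linarith
      have ih' := ih (by linarith)
      rw [ih', Finset.prod_range_succ]
      have h2 : Real.Gamma (x - k + 1) = (x - k) * Real.Gamma (x - k) := by
        rw [Real.Gamma_add_one (ne_of_gt hxk)]
      rw [h2]
      have : x - (k+1:ℕ) + 1 = x - k := by push_cast; ring
      rw [this]
      ring

lemma gch_gamma (x : ℝ) (k : ℕ) (h : 0 < x - k + 1) :
    gch x k = Real.Gamma (x + 1) / (Nat.factorial k * Real.Gamma (x - k + 1)) := by
  have h0 : 0 < x + 1 := by
    have : (0:ℝ) ≤ k := Nat.cast_nonneg k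
    linarith
  have hΓ : Real.Gamma (x - k + 1) ≠ 0 := ne_of_gt (Real.Gamma_pos_of_pos h)
  have hf : (Nat.factorial k : ℝ) ≠ 0 := by positivity
  rw [gamma_prod x k h]
  unfold gch
  field_simp

lemma Gamma_nat_add_three_half (n : ℕ) :
    Real.Gamma ((n:ℝ) + 3/2)
      = (Nat.factorial (2*n+1) : ℝ) * Real.sqrt Real.pi / (2^(2*n+1) * Nat.factorial n) := by
  have h := Real.Gamma_mul_Gamma_add_half ((n:ℝ)+1)
  rw [show ((n:ℝ)+1+1/2) = (n:ℝ)+3/2 by ring] at h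
  have h1 : Real.Gamma ((n:ℝ)+1) = (Nat.factorial n : ℝ) := by
    exact_mod_cast Real.Gamma_nat_eq_factorial n
  have h2 : Real.Gamma (2*((n:ℝ)+1)) = (Nat.factorial (2*n+1) : ℝ) := by
    rw [show 2*((n:ℝ)+1) = ((2*n+1 : ℕ):ℝ)+1 by push_cast; ring]
    exact_mod_cast Real.Gamma_nat_eq_factorial (2*n+1)
  have h3 : (2:ℝ) ^ (1 - 2*((n:ℝ)+1)) = ((2:ℝ)^(2*n+1))⁻¹ := by
    rw [show (1 - 2*((n:ℝ)+1)) = -((2*n+1:ℕ):ℝ) by push_cast; ring,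
      Real.rpow_neg (by norm_num), Real.rpow_natCast]
  rw [h1, h2, h3] at h
  have hn : (Nat.factorial n : ℝ) ≠ 0 := by positivity
  have hp : ((2:ℝ)^(2*n+1)) ≠ 0 := by positivity
  field_simp at h ⊢
  linarith [h]

lemma GV (q n : ℕ) :
    ∑ p ∈ Finset.HasAntidiagonal.antidiagonal n, (1:ℝ) / (Nat.factorial p.1 * Nat.factorial p.2
        * Real.Gamma ((q:ℝ) + p.1 + 3/2) * Real.Gamma ((q:ℝ) + p.2 + 5/2))
      = (Nat.factorial (2*q+2*n+2) : ℝ) / (Nat.factorial n * Nat.factorial (2*q+n+2)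
        * Real.Gamma ((q:ℝ) + n + 3/2) * Real.Gamma ((q:ℝ) + n + 5/2)) := by
  set X : ℝ := (q:ℝ) + n + 3/2 with hX
  set Y : ℝ := (q:ℝ) + n + 1/2 with hY
  have hΓa : 0 < Real.Gamma ((q:ℝ) + n + 5/2) := Real.Gamma_pos_of_pos (by positivity)
  have hΓb : 0 < Real.Gamma ((q:ℝ) + n + 3/2) := Real.Gamma_pos_of_pos (by positivity)
  have key : ∀ p ∈ Finset.HasAntidiagonal.antidiagonal n,
      gch X p.1 * gch Y p.2 = (Real.Gamma ((q:ℝ) + n + 5/2) * Real.Gamma ((q:ℝ) + n + 3/2))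
        * ((1:ℝ) / (Nat.factorial p.1 * Nat.factorial p.2
          * Real.Gamma ((q:ℝ) + p.1 + 3/2) * Real.Gamma ((q:ℝ) + p.2 + 5/2))) := by
    intro p hp
    have hpn := Finset.HasAntidiagonal.mem_antidiagonal.mp hp
    have hcast : (p.1 : ℝ) + (p.2 : ℝ) = (n : ℝ) := by exact_mod_cast congrArg (Nat.cast (R := ℝ)) hpn
    have h1 : gch X p.1 = Real.Gamma ((q:ℝ) + n + 5/2)
        / (Nat.factorial p.1 * Real.Gamma ((q:ℝ) + p.2 + 5/2)) := by
      rw [gch_gamma X p.1 (by rw [hX]; nlinarith [hcast, Nat.cast_nonneg (α := ℝ) p.2])]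
      rw [show X + 1 = (q:ℝ) + n + 5/2 by rw [hX]; ring,
        show X - p.1 + 1 = (q:ℝ) + p.2 + 5/2 by rw [hX]; linarith [hcast]]
    have h2 : gch Y p.2 = Real.Gamma ((q:ℝ) + n + 3/2)
        / (Nat.factorial p.2 * Real.Gamma ((q:ℝ) + p.1 + 3/2)) := by
      rw [gch_gamma Y p.2 (by rw [hY]; nlinarith [hcast, Nat.cast_nonneg (α := ℝ) p.1])]
      rw [show Y + 1 = (q:ℝ) + n + 3/2 by rw [hY]; ring,
        show Y - p.2 + 1 = (q:ℝ) + p.1 + 3/2 by rw [hY]; linarith [hcast]]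
    rw [h1, h2]
    have f1 : (Nat.factorial p.1 : ℝ) ≠ 0 := by positivity
    have f2 : (Nat.factorial p.2 : ℝ) ≠ 0 := by positivity
    have g1 : Real.Gamma ((q:ℝ) + p.1 + 3/2) ≠ 0 := ne_of_gt (Real.Gamma_pos_of_pos (by positivity))
    have g2 : Real.Gamma ((q:ℝ) + p.2 + 5/2) ≠ 0 := ne_of_gt (Real.Gamma_pos_of_pos (by positivity))
    field_simp
  have V := gch_vandermonde n X Y
  rw [Finset.sum_congr rfl key, ← Finset.mul_sum] at V
  have hXY : X + Y = ((2*q+2*n+2 : ℕ) : ℝ) := by rw [hX, hY]; push_cast; ring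
  have hRHS : gch (X + Y) n = (Nat.factorial (2*q+2*n+2) : ℝ)
      / (Nat.factorial n * Nat.factorial (2*q+n+2)) := by
    rw [gch_gamma (X+Y) n (by rw [hXY]; push_cast; linarith [Nat.cast_nonneg (α := ℝ) q]),
      hXY, show ((2*q+2*n+2:ℕ):ℝ) + 1 = ((2*q+2*n+2:ℕ):ℝ) + 1 from rfl]
    rw [show ((2*q+2*n+2:ℕ):ℝ) - n + 1 = ((2*q+n+2:ℕ):ℝ) + 1 by push_cast; ring]
    rw [Real.Gamma_nat_eq_factorial, Real.Gamma_nat_eq_factorial]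
  rw [hRHS] at V
  have f1 : (Nat.factorial n : ℝ) ≠ 0 := by positivity
  have f2 : (Nat.factorial (2*q+n+2) : ℝ) ≠ 0 := by positivity
  rw [eq_div_iff (by positivity :
    (Nat.factorial n : ℝ) * Nat.factorial (2*q+n+2) ≠ 0)] at V
  rw [eq_div_iff (by positivity)]
  linear_combination V

noncomputable def co (q k : ℕ) : ℝ :=
  (-1)^k * 2^q * (Nat.factorial (q+k)) / (Nat.factorial k * Nat.factorial (2*(q+k)+1))

lemma sqrt_pi_ne : Real.sqrt Real.pi ≠ 0 := by positivity

lemma termwise (q k l : ℕ) :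
    co q k * co (q+1) l = ((-1)^(k+l) * Real.pi / 2^(2*q+2*(k+l)+3)) *
      ((1:ℝ) / (Nat.factorial k * Nat.factorial l
        * Real.Gamma ((q:ℝ) + k + 3/2) * Real.Gamma ((q:ℝ) + l + 5/2))) := by
  have e1 : Real.Gamma ((q:ℝ) + k + 3/2) = Real.Gamma (((q+k:ℕ):ℝ) + 3/2) := by push_cast; ring_nf
  have e2 : Real.Gamma ((q:ℝ) + l + 5/2) = Real.Gamma (((q+l+1:ℕ):ℝ) + 3/2) := by push_cast; ring_nf
  rw [e1, e2, Gamma_nat_add_three_half, Gamma_nat_add_three_half]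
  unfold co
  have i1 : (q+1)+l = q+l+1 := by omega
  rw [i1]
  have n1 : (Nat.factorial k : ℝ) ≠ 0 := by positivity
  have n2 : (Nat.factorial l : ℝ) ≠ 0 := by positivity
  have n3 : (Nat.factorial (q+k) : ℝ) ≠ 0 := by positivity
  have n4 : (Nat.factorial (q+l+1) : ℝ) ≠ 0 := by positivity
  have n5 : (Nat.factorial (2*(q+k)+1) : ℝ) ≠ 0 := by positivity
  have n6 : (Nat.factorial (2*(q+l+1)+1) : ℝ) ≠ 0 := by positivity
  field_simp
  ring_nf
  simp only [Real.sq_sqrt Real.pi_pos.le, Real.mul_self_sqrt Real.pi_pos.le]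

lemma LemA (q n : ℕ) :
    ∑ p ∈ Finset.HasAntidiagonal.antidiagonal n, co q p.1 * co (q+1) p.2
      = (-1)^n * 2^(2*q+2*n+2) * ((Nat.factorial (q+n+1) : ℝ))^2
        / (Nat.factorial n * Nat.factorial (2*q+2*n+3) * Nat.factorial (2*q+n+2)) := by
  have step : ∑ p ∈ Finset.HasAntidiagonal.antidiagonal n, co q p.1 * co (q+1) p.2
      = ((-1)^n * Real.pi / 2^(2*q+2*n+3)) *
        ∑ p ∈ Finset.HasAntidiagonal.antidiagonal n, ((1:ℝ) / (Nat.factorial p.1 * Nat.factorial p.2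
          * Real.Gamma ((q:ℝ) + p.1 + 3/2) * Real.Gamma ((q:ℝ) + p.2 + 5/2))) := by
    rw [Finset.mul_sum]
    apply Finset.sum_congr rfl
    intro p hp
    rw [termwise, Finset.HasAntidiagonal.mem_antidiagonal.mp hp]
  rw [step, GV]
  have e1 : Real.Gamma ((q:ℝ) + n + 3/2) = Real.Gamma (((q+n:ℕ):ℝ) + 3/2) := by push_cast; ring_nf
  have e2 : Real.Gamma ((q:ℝ) + n + 5/2) = Real.Gamma (((q+n+1:ℕ):ℝ) + 3/2) := by push_cast; ring_nf
  rw [e1, e2, Gamma_nat_add_three_half, Gamma_nat_add_three_half]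
  have f1 : Nat.factorial (2*q+2*n+2) = (2*q+2*n+2) * Nat.factorial (2*q+2*n+1) := by
    rw [show 2*q+2*n+2 = (2*q+2*n+1)+1 by ring]; exact Nat.factorial_succ _
  have f2 : Nat.factorial (2*q+2*n+3) = (2*q+2*n+3) * Nat.factorial (2*q+2*n+2) := by
    rw [show 2*q+2*n+3 = (2*q+2*n+2)+1 by ring]; exact Nat.factorial_succ _
  have f3 : Nat.factorial (q+n+1) = (q+n+1) * Nat.factorial (q+n) := Nat.factorial_succ _
  have f4 : 2*(q+n)+1 = 2*q+2*n+1 := by ring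
  have f5 : 2*(q+n+1)+1 = 2*q+2*n+3 := by ring
  rw [f4, f5, f2, f1, f3]
  have n1 : (Nat.factorial n : ℝ) ≠ 0 := by positivity
  have n2 : (Nat.factorial (2*q+n+2) : ℝ) ≠ 0 := by positivity
  have n3 : (Nat.factorial (q+n) : ℝ) ≠ 0 := by positivity
  have n4 : (Nat.factorial (2*q+2*n+1) : ℝ) ≠ 0 := by positivity
  push_cast
  field_simp
  ring_nf
  simp only [Real.sq_sqrt Real.pi_pos.le, Real.mul_self_sqrt Real.pi_pos.le]

lemma sphBessel_eq (q : ℕ) (x : ℝ) :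
    sphBessel q x = ∑' k : ℕ, co q k * x^(2*k+q) := by
  unfold sphBessel
  rw [← tsum_mul_left]
  apply tsum_congr
  intro k
  have e1 : ((k:ℝ) + q + 3/2) = ((q+k:ℕ):ℝ) + 3/2 := by push_cast; ring
  rw [e1, Gamma_nat_add_three_half]
  unfold co
  have n1 : (Nat.factorial k : ℝ) ≠ 0 := by positivity
  have n2 : (Nat.factorial (q+k) : ℝ) ≠ 0 := by positivity
  have n3 : (Nat.factorial (2*(q+k)+1) : ℝ) ≠ 0 := by positivity
  have n4 : Real.sqrt Real.pi ≠ 0 := by positivity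
  rw [div_pow, pow_add, pow_mul]
  field_simp
  ring

lemma summable_norm_co (q : ℕ) (x : ℝ) :
    Summable (fun k : ℕ => ‖co q k * x^(2*k+q)‖) := by
  have hg : Summable (fun k : ℕ => (2^q * |x|^q) * ((x^2)^k / (Nat.factorial k : ℝ))) :=
    (Real.summable_pow_div_factorial (x^2)).mul_left _
  refine Summable.of_nonneg_of_le (fun k => norm_nonneg _) (fun k => ?_) hg
  rw [norm_mul]
  have h1 : ‖co q k‖ ≤ 2^q / Nat.factorial k := by
    unfold co
    rw [Real.norm_eq_abs, abs_div, abs_mul, abs_mul, abs_pow, abs_neg, abs_one, one_pow,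
      one_mul]
    rw [abs_of_nonneg (by positivity : (0:ℝ) ≤ (2:ℝ)^q),
      abs_of_nonneg (by positivity : (0:ℝ) ≤ ((Nat.factorial (q+k) : ℝ))),
      abs_of_nonneg (by positivity : (0:ℝ) ≤ ((Nat.factorial k : ℝ) * (Nat.factorial (2*(q+k)+1) : ℝ)))]
    rw [div_le_div_iff₀ (by positivity) (by positivity)]
    have hfle : (Nat.factorial (q+k) : ℝ) ≤ (Nat.factorial (2*(q+k)+1) : ℝ) := by
      exact_mod_cast Nat.factorial_le (by omega)
    calc (2:ℝ)^q * (Nat.factorial (q+k)) * (Nat.factorial k)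
        ≤ 2^q * (Nat.factorial (2*(q+k)+1)) * (Nat.factorial k) := by
          gcongr
      _ = 2^q * ((Nat.factorial k) * (Nat.factorial (2*(q+k)+1))) := by ring
  have h2 : ‖x^(2*k+q)‖ = |x|^q * (x^2)^k := by
    rw [Real.norm_eq_abs, abs_pow, pow_add, pow_mul, sq_abs]; ring
  rw [h2]
  calc ‖co q k‖ * (|x|^q * (x^2)^k)
      ≤ (2^q / Nat.factorial k) * (|x|^q * (x^2)^k) := by
        apply mul_le_mul_of_nonneg_right h1 (by positivity)
    _ = (2^q * |x|^q) * ((x^2)^k / Nat.factorial k) := by ring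

lemma summable_co (q : ℕ) (x : ℝ) : Summable (fun k : ℕ => co q k * x^(2*k+q)) :=
  (summable_norm_co q x).of_norm

lemma prod_eq (q : ℕ) (x : ℝ) : sphBessel q x * sphBessel (q+1) x
    = ∑' n : ℕ, (∑ p ∈ Finset.HasAntidiagonal.antidiagonal n, co q p.1 * co (q+1) p.2) * x^(2*n+(2*q+1)) := by
  rw [sphBessel_eq q x, sphBessel_eq (q+1) x,
    tsum_mul_tsum_eq_tsum_sum_antidiagonal_of_summable_norm
      (summable_norm_co q x) (summable_norm_co (q+1) x)]
  apply tsum_congr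
  intro n
  rw [Finset.sum_mul]
  apply Finset.sum_congr rfl
  intro p hp
  have hpn := Finset.HasAntidiagonal.mem_antidiagonal.mp hp
  have : x^(2*p.1+q) * x^(2*p.2+(q+1)) = x^(2*n+(2*q+1)) := by
    rw [← pow_add]
    congr 1
    omega
  calc co q p.1 * x^(2*p.1+q) * (co (q+1) p.2 * x^(2*p.2+(q+1)))
      = co q p.1 * co (q+1) p.2 * (x^(2*p.1+q) * x^(2*p.2+(q+1))) := by ring
    _ = co q p.1 * co (q+1) p.2 * x^(2*n+(2*q+1)) := by rw [this]

noncomputable def E (q n : ℕ) : ℝ :=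
  (-1)^n * 2^(2*q+2*n+2) * ((Nat.factorial (q+n+1) : ℝ))^2
    / (Nat.factorial n * Nat.factorial (2*q+2*n+3) * Nat.factorial (2*q+n+2))

lemma alt_sum (N : ℕ) : ∀ J : ℕ, ∑ j ∈ Finset.range (J+1), (-1:ℤ)^j * ((N+1).choose j)
    = (-1)^J * (N.choose J) := by
  intro J
  induction J with
  | zero => simp
  | succ J ih =>
      rw [Finset.sum_range_succ, ih, Nat.choose_succ_succ (N) (J)]
      push_cast
      ring

lemma choose_half (m : ℕ) : 2 * (2*m+1).choose m = (2*m+2).choose (m+1) := by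
  have h1 : (2*m+2).choose (m+1) = (2*m+1).choose m + (2*m+1).choose (m+1) :=
    Nat.choose_succ_succ (2*m+1) m
  have h2 : (2*m+1).choose (m+1) = (2*m+1).choose m := by
    have := Nat.choose_symm (n := 2*m+1) (k := m) (by omega)
    rw [show 2*m+1-m = m+1 by omega] at this
    exact this
  omega

lemma finsum_eval (m : ℕ) (x : ℝ) :
    ∑ p ∈ Finset.HasAntidiagonal.antidiagonal m, E p.1 p.2 * x^(2*p.2+(2*p.1+1))
      = ((-1)^m * 2^(2*m+1) / (Nat.factorial (2*m+3))) * x^(2*m+1) := by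
  have step1 : ∀ p ∈ Finset.HasAntidiagonal.antidiagonal m,
      E p.1 p.2 * x^(2*p.2+(2*p.1+1))
        = (x^(2*m+1) * 2^(2*m+2) * ((Nat.factorial (m+1):ℝ))^2
            / (Nat.factorial (2*m+3) * Nat.factorial (2*m+2)))
          * ((-1)^p.2 * (((2*m+2).choose p.2 : ℕ) : ℝ)) := by
    intro p hp
    have hpm := Finset.HasAntidiagonal.mem_antidiagonal.mp hp
    unfold E
    rw [show p.1+p.2+1 = m+1 by omega, show 2*p.1+2*p.2+2 = 2*m+2 by omega,
      show 2*p.1+2*p.2+3 = 2*m+3 by omega, show 2*p.1+p.2+2 = m+p.1+2 by omega,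
      show 2*p.2+(2*p.1+1) = 2*m+1 by omega]
    have key : (((2*m+2).choose p.2 : ℕ) : ℝ) * (Nat.factorial p.2) * (Nat.factorial (m+p.1+2))
        = (Nat.factorial (2*m+2) : ℝ) := by
      have := Nat.choose_mul_factorial_mul_factorial (n := 2*m+2) (k := p.2) (by omega)
      rw [show 2*m+2-p.2 = m+p.1+2 by omega] at this
      exact_mod_cast congrArg (Nat.cast (R := ℝ)) this
    have n1 : (Nat.factorial p.2 : ℝ) ≠ 0 := by positivity
    have n2 : (Nat.factorial (m+p.1+2) : ℝ) ≠ 0 := by positivity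
    have n3 : (Nat.factorial (2*m+3) : ℝ) ≠ 0 := by positivity
    have n4 : (Nat.factorial (2*m+2) : ℝ) ≠ 0 := by positivity
    field_simp
    linear_combination (-(x^(2*m+1))) * key
  rw [Finset.sum_congr rfl step1, ← Finset.mul_sum]
  have swap : ∑ p ∈ Finset.HasAntidiagonal.antidiagonal m, ((-1:ℝ)^p.2 * (((2*m+2).choose p.2 : ℕ) : ℝ))
      = ∑ j ∈ Finset.range (m+1), ((-1:ℝ)^j * (((2*m+2).choose j : ℕ) : ℝ)) := by
    have hsw := Finset.Nat.sum_antidiagonal_swap (n := m)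
      (f := fun p => ((-1:ℝ)^p.1 * (((2*m+2).choose p.1 : ℕ) : ℝ)))
    simp only [Prod.fst_swap] at hsw
    rw [hsw, Finset.Nat.sum_antidiagonal_eq_sum_range_succ_mk]
  have cast_alt : ∑ j ∈ Finset.range (m+1), ((-1:ℝ)^j * (((2*m+2).choose j : ℕ) : ℝ))
      = (-1:ℝ)^m * (((2*m+1).choose m : ℕ) : ℝ) := by
    have h := alt_sum (2*m+1) m
    rw [show 2*m+1+1 = 2*m+2 by omega] at h
    exact_mod_cast congrArg (Int.cast (R := ℝ)) h
  rw [swap, cast_alt]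
  have h2 : ((((2*m+2).choose (m+1) : ℕ)) : ℝ) * (Nat.factorial (m+1)) * (Nat.factorial (m+1))
      = (Nat.factorial (2*m+2) : ℝ) := by
    have := Nat.choose_mul_factorial_mul_factorial (n := 2*m+2) (k := m+1) (by omega)
    rw [show 2*m+2-(m+1) = m+1 by omega] at this
    exact_mod_cast congrArg (Nat.cast (R := ℝ)) this
  have h3 : ((((2*m+2).choose (m+1) : ℕ)) : ℝ) = 2 * (((2*m+1).choose m : ℕ) : ℝ) := by
    exact_mod_cast congrArg (Nat.cast (R := ℝ)) (choose_half m).symm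
  have n3 : (Nat.factorial (2*m+3) : ℝ) ≠ 0 := by positivity
  have n4 : (Nat.factorial (2*m+2) : ℝ) ≠ 0 := by positivity
  rw [h3] at h2
  field_simp
  linear_combination (x^(2*m+1) * 2^(2*m+1)) * h2

lemma tsum_antidiag (f : ℕ × ℕ → ℝ) (hf : Summable f) :
    ∑' z : ℕ × ℕ, f z = ∑' m : ℕ, ∑ p ∈ Finset.HasAntidiagonal.antidiagonal m, f p := by
  conv_rhs => congr; ext; rw [← Finset.sum_finset_coe, ← tsum_fintype (L := SummationFilter.unconditional _)]
  rw [← Finset.HasAntidiagonal.sigmaAntidiagonalEquivProd.tsum_eq f]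
  exact Summable.tsum_sigma' (fun n => (hasSum_fintype _).summable)
    (Finset.HasAntidiagonal.sigmaAntidiagonalEquivProd.summable_iff.mpr hf)

lemma E_bound (q n : ℕ) :
    |E q n| ≤ 2^(2*q+2*n+2) / (Nat.factorial n * Nat.factorial q) := by
  have h1 : ((Nat.factorial (q+n+1) : ℝ))^2 ≤ (Nat.factorial (2*q+2*n+3) : ℝ) := by
    have hd : Nat.factorial (q+n+1) * Nat.factorial (q+n+1) ∣ Nat.factorial ((q+n+1)+(q+n+1)) :=
      Nat.factorial_mul_factorial_dvd_factorial_add _ _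
    have hle : Nat.factorial (q+n+1) * Nat.factorial (q+n+1) ≤ Nat.factorial (2*q+2*n+3) := by
      calc Nat.factorial (q+n+1) * Nat.factorial (q+n+1)
          ≤ Nat.factorial ((q+n+1)+(q+n+1)) := Nat.le_of_dvd (Nat.factorial_pos _) hd
        _ ≤ Nat.factorial (2*q+2*n+3) := Nat.factorial_le (by omega)
    have := (Nat.cast_le (α := ℝ)).mpr hle
    push_cast at this
    nlinarith [this]
  have h2 : (Nat.factorial q : ℝ) ≤ (Nat.factorial (2*q+n+2) : ℝ) := by
    exact_mod_cast Nat.factorial_le (by omega)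
  have habs : |E q n| = 2^(2*q+2*n+2) * ((Nat.factorial (q+n+1) : ℝ))^2
      / (Nat.factorial n * Nat.factorial (2*q+2*n+3) * Nat.factorial (2*q+n+2)) := by
    unfold E
    rw [abs_div, abs_mul, abs_mul, abs_pow, abs_neg, abs_one, one_pow, one_mul,
      abs_of_nonneg (by positivity : (0:ℝ) ≤ (2:ℝ)^(2*q+2*n+2)),
      abs_of_nonneg (by positivity : (0:ℝ) ≤ ((Nat.factorial (q+n+1) : ℝ))^2),
      abs_of_nonneg (by positivity : (0:ℝ) ≤ ((Nat.factorial n : ℝ) * (Nat.factorial (2*q+2*n+3) : ℝ) * (Nat.factorial (2*q+n+2) : ℝ)))]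
  rw [habs]
  have p1 : (0:ℝ) < Nat.factorial n := by positivity
  have p2 : (0:ℝ) < Nat.factorial (2*q+2*n+3) := by positivity
  have p3 : (0:ℝ) < Nat.factorial (2*q+n+2) := by positivity
  have p4 : (0:ℝ) < Nat.factorial q := by positivity
  calc 2^(2*q+2*n+2) * ((Nat.factorial (q+n+1) : ℝ))^2
      / (Nat.factorial n * Nat.factorial (2*q+2*n+3) * Nat.factorial (2*q+n+2))
      ≤ 2^(2*q+2*n+2) * (Nat.factorial (2*q+2*n+3) : ℝ)
        / (Nat.factorial n * Nat.factorial (2*q+2*n+3) * Nat.factorial (2*q+n+2)) := by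
        gcongr
    _ = 2^(2*q+2*n+2) / (Nat.factorial n * Nat.factorial (2*q+n+2)) := by
        field_simp
    _ ≤ 2^(2*q+2*n+2) / (Nat.factorial n * Nat.factorial q) := by gcongr

set_option maxHeartbeats 1000000 in
lemma summable_G (x : ℝ) :
    Summable (fun z : ℕ × ℕ => E z.1 z.2 * x^(2*z.2+(2*z.1+1))) := by
  have hf : Summable (fun q : ℕ => ‖(4*|x|) * ((4*x^2)^q / (Nat.factorial q : ℝ))‖) := by
    exact Summable.congr ((Real.summable_pow_div_factorial (4*x^2)).mul_left (4*|x|)).abs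
      (fun q => (Real.norm_eq_abs _).symm)
  have hg : Summable (fun n : ℕ => ‖(4*x^2)^n / (Nat.factorial n : ℝ)‖) := by
    exact Summable.congr (Real.summable_pow_div_factorial (4*x^2)).abs
      (fun q => (Real.norm_eq_abs _).symm)
  have hb : Summable (fun z : ℕ × ℕ =>
      ((4*|x|) * ((4*x^2)^z.1 / (Nat.factorial z.1 : ℝ))) * ((4*x^2)^z.2 / (Nat.factorial z.2 : ℝ))) :=
    summable_mul_of_summable_norm hf hg
  apply Summable.of_norm_bounded hb
  intro z
  obtain ⟨q, n⟩ := z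
  simp only
  rw [norm_mul, Real.norm_eq_abs, Real.norm_eq_abs, abs_pow]
  have hEb := E_bound q n
  have hxp : (0:ℝ) ≤ |x|^(2*n+(2*q+1)) := by positivity
  calc |E q n| * |x|^(2*n+(2*q+1))
      ≤ (2^(2*q+2*n+2) / (Nat.factorial n * Nat.factorial q)) * |x|^(2*n+(2*q+1)) := by
        exact mul_le_mul_of_nonneg_right hEb hxp
    _ = ((4*|x|) * ((4*x^2)^q / (Nat.factorial q : ℝ))) * ((4*x^2)^n / (Nat.factorial n : ℝ)) := by
        have e2 : (2:ℝ)^(2*q+2*n+2) = 4^q * 4^n * 4 := by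
          rw [show (4:ℝ) = 2^2 by norm_num, ← pow_mul, ← pow_mul, ← pow_add, ← pow_add]
        have e3 : |x|^(2*n+(2*q+1)) = (x^2)^n * ((x^2)^q * |x|) := by
          rw [pow_add, pow_add, pow_mul, pow_mul, sq_abs, pow_one]
        rw [e2, e3]
        have n1 : (Nat.factorial q : ℝ) ≠ 0 := by positivity
        have n2 : (Nat.factorial n : ℝ) ≠ 0 := by positivity
        field_simp
        ring

lemma rhs_eq (x : ℝ) (hx : x ≠ 0) :
    (1 - sphBessel 0 (2*x)) / (2*x)
      = ∑' m : ℕ, ((-1)^m * 2^(2*m+1) / (Nat.factorial (2*m+3))) * x^(2*m+1) := by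
  have h2x : (2*x) ≠ 0 := mul_ne_zero two_ne_zero hx
  have hterm : ∀ k : ℕ, co 0 k * (2*x)^(2*k+0)
      = (-1:ℝ)^k * (2*x)^(2*k) / (Nat.factorial (2*k+1)) := by
    intro k
    unfold co
    simp only [Nat.zero_add, pow_zero, Nat.add_zero, mul_one]
    have n1 : (Nat.factorial k : ℝ) ≠ 0 := by positivity
    have n2 : (Nat.factorial (2*k+1) : ℝ) ≠ 0 := by positivity
    field_simp
  have hs : sphBessel 0 (2*x) = ∑' k:ℕ, (-1:ℝ)^k * (2*x)^(2*k) / (Nat.factorial (2*k+1)) := by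
    rw [sphBessel_eq 0 (2*x)]; exact tsum_congr hterm
  have hsum : Summable (fun k:ℕ => (-1:ℝ)^k * (2*x)^(2*k) / (Nat.factorial (2*k+1))) :=
    (summable_co 0 (2*x)).congr hterm
  rw [hs, Summable.tsum_eq_zero_add hsum]
  have h0 : (-1:ℝ)^0 * (2*x)^(2*0)/((Nat.factorial (2*0+1) : ℕ) : ℝ) = 1 := by norm_num
  rw [h0]
  have hneg : (1 : ℝ) - (1 + ∑' k:ℕ, (-1:ℝ)^(k+1) * (2*x)^(2*(k+1)) / (Nat.factorial (2*(k+1)+1)))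
      = ∑' k:ℕ, -((-1:ℝ)^(k+1) * (2*x)^(2*(k+1)) / (Nat.factorial (2*(k+1)+1))) := by
    rw [tsum_neg]; ring
  rw [hneg, ← tsum_div_const]
  apply tsum_congr
  intro k
  have e1 : 2*(k+1) = 2*k+2 := by omega
  have e2 : 2*(k+1)+1 = 2*k+3 := by omega
  rw [e1, show 2*k+2+1 = 2*k+3 by omega]
  have n3 : (Nat.factorial (2*k+3) : ℝ) ≠ 0 := by positivity
  rw [pow_succ (-1:ℝ) k, show (2*x)^(2*k+2) = (2*x)^(2*k+1) * (2*x) by rw [← pow_succ],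
    mul_pow (2:ℝ) x (2*k+1)]
  field_simp

/-- For all real `x ≠ 0`, `∑_{q=0}^∞ j_q(x) j_{q+1}(x) = (1 − j_0(2x))/(2x)`. -/
theorem sphBessel_tsum_cross (x : ℝ) (hx : x ≠ 0) :
    ∑' q : ℕ, sphBessel q x * sphBessel (q + 1) x
      = (1 - sphBessel 0 (2 * x)) / (2 * x) := by
  have hG := summable_G x
  have step1 : ∑' q:ℕ, sphBessel q x * sphBessel (q+1) x
      = ∑' (q:ℕ) (n:ℕ), E q n * x^(2*n+(2*q+1)) := by
    apply tsum_congr; intro q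
    rw [prod_eq q x]
    exact tsum_congr (fun n => by rw [LemA q n]; rfl)
  have step2 : (∑' (q:ℕ) (n:ℕ), E q n * x^(2*n+(2*q+1)))
      = ∑' z : ℕ×ℕ, E z.1 z.2 * x^(2*z.2+(2*z.1+1)) := (Summable.tsum_prod hG).symm
  have step3 := tsum_antidiag _ hG
  have step4 : (∑' m:ℕ, ∑ p ∈ Finset.HasAntidiagonal.antidiagonal m, E p.1 p.2 * x^(2*p.2+(2*p.1+1)))
      = ∑' m:ℕ, ((-1)^m * 2^(2*m+1)/(Nat.factorial (2*m+3))) * x^(2*m+1) :=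
    tsum_congr (fun m => finsum_eval m x)
  rw [step1, step2, step3, step4, rhs_eq x hx]
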